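/- Let g ≥ 0, T > 0, let f₁, f₂ : ℝ → ℝ be C² and T-periodic with f₁(t) < f₂(t) for all t, and fix l > sup_{t₁,t₂} |f₂(t₂) − f₁(t₁)|. Then there exist r > 0 and c₀ ∈ (0, 1) such that for every 6-tuple (t, v, t̃, ṽ, t', v') satisfying the one-step Fermi–Ulam relations with v' > 0 and 0 < 2l/v ≤ r, one has |t' − t − 2l/v| < c₀·(2l/v). -/

import Mathlib

open Filter Topology

/-- One bounce cycle of the Fermi–Ulam model in an external field with downward
acceleration `g`: the ball leaves the lower plate `f₁` at time `t` with
velocity `v > 0`, hits the upper plate `f₂` at the first possible time `t̃ > t`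
leaving it with velocity `ṽ < 0`, and returns to the lower plate at the first
possible time `t' > t̃`, leaving it with velocity `v'`. -/
def FUStep (g : ℝ) (f₁ f₂ : ℝ → ℝ) (t v tt vv t' v' : ℝ) : Prop :=
  0 < v ∧ vv < 0 ∧ t < tt ∧ tt < t' ∧
  f₂ tt - f₁ t = v * (tt - t) - g / 2 * (tt - t) ^ 2 ∧
  (∀ s : ℝ, t < s →
    f₂ s - f₁ t = v * (s - t) - g / 2 * (s - t) ^ 2 → tt ≤ s) ∧
  vv = -v + g * (tt - t) + 2 * deriv f₂ tt ∧
  f₂ tt - f₁ t' = -vv * (t' - tt) + g / 2 * (t' - tt) ^ 2 ∧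
  (∀ s : ℝ, tt < s →
    f₂ tt - f₁ s = -vv * (s - tt) + g / 2 * (s - tt) ^ 2 → t' ≤ s) ∧
  v' = v + g * (t' - 2 * tt + t) + 2 * deriv f₁ t' - 2 * deriv f₂ tt

/-- A continuous periodic real function attains a global minimum. -/
lemma periodic_global_min (f : ℝ → ℝ) (T : ℝ) (hT : 0 < T) (hc : Continuous f)
    (hp : Function.Periodic f T) : ∃ x₀ : ℝ, ∀ x, f x₀ ≤ f x := by
  obtain ⟨x₀, hx₀, hmin⟩ :=
    isCompact_Icc.exists_isMinOn (Set.nonempty_Icc.2 hT.le) hc.continuousOn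
  refine ⟨x₀, fun x => ?_⟩
  obtain ⟨y, hy, hxy⟩ := hp.exists_mem_Ico₀ hT x
  rw [hxy]
  exact hmin (Set.Ico_subset_Icc_self hy)

/-- A continuous periodic real function is globally bounded. -/
lemma periodic_global_bound (f : ℝ → ℝ) (T : ℝ) (hT : 0 < T) (hc : Continuous f)
    (hp : Function.Periodic f T) : ∃ M : ℝ, 0 ≤ M ∧ ∀ x, |f x| ≤ M := by
  obtain ⟨x₀, h⟩ := periodic_global_min (fun x => -|f x|) T hT
    hc.abs.neg (fun x => by simp [hp x])
  refine ⟨|f x₀|, abs_nonneg _, fun x => ?_⟩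
  have hx := h x
  simp only [neg_le_neg_iff] at hx
  exact hx

/-- The derivative of a periodic function is periodic. -/
lemma periodic_deriv' (f : ℝ → ℝ) (T : ℝ) (hp : Function.Periodic f T) :
    Function.Periodic (deriv f) T := by
  intro x
  have hfun : (fun y => f (y + T)) = f := funext fun y => hp y
  calc deriv f (x + T) = deriv (fun y => f (y + T)) x := (deriv_comp_add_const f T x).symm
    _ = deriv f x := by rw [hfun]

/-- The first inequality of estimate (4.23): in the coordinate `y = 2l/v`, with
`l` larger than the total oscillation as in (4.22), the angular displacement
`t' − t` of the Fermi–Ulam return map equals `y` up to an error strictly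
smaller than `c₀·y` with `c₀ < 1`. -/
theorem fermi_ulam_angular_estimate
    (g T : ℝ) (hg : 0 ≤ g) (hT : 0 < T) (f₁ f₂ : ℝ → ℝ)
    (hf₁ : ContDiff ℝ 2 f₁) (hf₂ : ContDiff ℝ 2 f₂)
    (hper₁ : Function.Periodic f₁ T) (hper₂ : Function.Periodic f₂ T)
    (hlt : ∀ s : ℝ, f₁ s < f₂ s)
    (l : ℝ) (hl : ∀ t₁ t₂ : ℝ, |f₂ t₂ - f₁ t₁| < l) :
    ∃ r > (0 : ℝ), ∃ c₀ : ℝ, 0 < c₀ ∧ c₀ < 1 ∧ ∀ t v tt vv t' v' : ℝ,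
      FUStep g f₁ f₂ t v tt vv t' v' → 0 < v' →
      0 < 2 * l / v → 2 * l / v ≤ r →
      |t' - t - 2 * l / v| < c₀ * (2 * l / v) := by
  have hc₁ : Continuous f₁ := hf₁.continuous
  have hc₂ : Continuous f₂ := hf₂.continuous
  have hd₁c : Continuous (deriv f₁) := hf₁.continuous_deriv one_le_two
  have hd₂c : Continuous (deriv f₂) := hf₂.continuous_deriv one_le_two
  obtain ⟨M₁, hM₁0, hM₁⟩ :=
    periodic_global_bound (deriv f₁) T hT hd₁c (periodic_deriv' f₁ T hper₁)
  obtain ⟨M₂, hM₂0, hM₂⟩ :=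
    periodic_global_bound (deriv f₂) T hT hd₂c (periodic_deriv' f₂ T hper₂)
  obtain ⟨x₀, hx₀⟩ := periodic_global_min (fun s => f₂ s - f₁ s) T hT
    (hc₂.sub hc₁) (fun x => by simp only []; rw [hper₁ x, hper₂ x])
  set m := f₂ x₀ - f₁ x₀ with hm_def
  have hmle : ∀ x, m ≤ f₂ x - f₁ x := hx₀
  have hm0 : 0 < m := sub_pos.2 (hlt x₀)
  have hml : m < l := lt_of_le_of_lt (le_abs_self _) (hl x₀ x₀)
  clear_value m
  have hl0 : 0 < l := hm0.trans hml
  have h8l : (0:ℝ) < 8 * l := by linarith only [hl0]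
  have hq0 : 0 < m / (8 * l) := div_pos hm0 h8l
  have hq18 : m / (8 * l) < 1 / 8 := by
    rw [div_lt_iff₀ h8l]; linarith only [hml]
  -- global mean value bound for f₁
  have hMVT : ∀ a b : ℝ, |f₁ b - f₁ a| ≤ M₁ * |b - a| := by
    intro a b
    have h := Convex.norm_image_sub_le_of_norm_deriv_le
      (f := f₁) (s := Set.univ)
      (fun x _ => hf₁.differentiable two_ne_zero x)
      (fun x _ => by simpa [Real.norm_eq_abs] using hM₁ x)
      convex_univ (Set.mem_univ a) (Set.mem_univ b)
    simpa [Real.norm_eq_abs] using h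
  set K := g + 2 * M₂ + 1 with hK_def
  have hK0 : 0 < K := by rw [hK_def]; linarith only [hg, hM₂0]
  have hgK : g ≤ K - 1 := by rw [hK_def]; linarith only [hM₂0]
  have hM₂K : g + 2 * M₂ = K - 1 := by rw [hK_def]; ring
  clear_value K
  have h2K : (0:ℝ) < 2 * K := by linarith only [hK0]
  refine ⟨min 1 (min (l / (2 * K)) (2 * l / (M₁ + 1))), ?_, 1 - m / (8 * l), ?_, ?_, ?_⟩
  · have h1 : (0:ℝ) < l / (2 * K) := div_pos hl0 h2K
    have h2 : (0:ℝ) < 2 * l / (M₁ + 1) := div_pos (by linarith only [hl0]) (by linarith only [hM₁0])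
    simp only [lt_min_iff]
    exact ⟨one_pos, h1, h2⟩
  · linarith only [hq18]
  · linarith only [hq0]
  intro t v tt vv t' v' hstep hv'pos hypos hyr
  obtain ⟨hv, hvvneg, h_t_tt, h_tt_t', heq1, hmin1, hvveq, heq2, hmin2, hv'eq⟩ := hstep
  set y := 2 * l / v with hy_def
  have hy0 : 0 < y := hypos
  have hvy : v * y = 2 * l := by
    rw [hy_def]; field_simp
  clear_value y
  have hyr1 : y ≤ 1 := le_trans hyr (min_le_left _ _)
  have hyr2 : y ≤ l / (2 * K) := le_trans hyr (le_trans (min_le_right _ _) (min_le_left _ _))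
  have hyr3 : y ≤ 2 * l / (M₁ + 1) := le_trans hyr (le_trans (min_le_right _ _) (min_le_right _ _))
  -- v is large
  have hv4K : 4 * K ≤ v := by
    have h1 : v * y ≤ v * (l / (2 * K)) := mul_le_mul_of_nonneg_left hyr2 hv.le
    rw [hvy] at h1
    have h2 : 2 * l * (2 * K) ≤ v * l := by
      rw [← le_div_iff₀ h2K]
      calc 2 * l ≤ v * (l / (2 * K)) := h1
        _ = v * l / (2 * K) := by ring
    by_contra h
    push_neg at h
    have h3 : v * l < 4 * K * l := mul_lt_mul_of_pos_right h hl0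
    linarith only [h2, h3]
  have hvM : M₁ + 1 ≤ v := by
    have h1 : v * y ≤ v * (2 * l / (M₁ + 1)) := mul_le_mul_of_nonneg_left hyr3 hv.le
    rw [hvy] at h1
    have h2 : 2 * l * (M₁ + 1) ≤ v * (2 * l) := by
      rw [← le_div_iff₀ (by linarith only [hM₁0] : (0:ℝ) < M₁ + 1)]
      calc 2 * l ≤ v * (2 * l / (M₁ + 1)) := h1
        _ = v * (2 * l) / (M₁ + 1) := by ring
    by_contra h
    push_neg at h
    have h3 : v * (2 * l) < (M₁ + 1) * (2 * l) :=
      mul_lt_mul_of_pos_right h (by linarith only [hl0])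
    linarith only [h2, h3]
  have hgy : g * y ≤ l / 2 := by
    have h1 : g * y ≤ g * (l / (2 * K)) := mul_le_mul_of_nonneg_left hyr2 hg
    have h2 : g * (l / (2 * K)) ≤ l / 2 := by
      have h3 : g * (l / (2 * K)) = g * l / (2 * K) := by ring
      rw [h3, div_le_div_iff₀ h2K (by norm_num : (0:ℝ) < 2)]
      have h5 : g * l ≤ (K - 1) * l := mul_le_mul_of_nonneg_right hgK hl0.le
      linarith only [h5, hl0]
    linarith only [h1, h2]
  -- Step 1: the upward flight takes less than time y (intermediate value argument)
  set φ : ℝ → ℝ := fun s => f₂ s - f₁ t - (v * (s - t) - g / 2 * (s - t) ^ 2) with hφ_def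
  clear_value φ
  have hφc : Continuous φ := by
    rw [hφ_def]
    apply (hc₂.sub continuous_const).sub
    exact (continuous_const.mul (continuous_id.sub continuous_const)).sub
      (continuous_const.mul ((continuous_id.sub continuous_const).pow 2))
  have hφt : 0 < φ t := by
    simp only [hφ_def]
    linarith only [hlt t]
  have hφty : φ (t + y) < 0 := by
    have hl1 : f₂ (t + y) - f₁ t < l := lt_of_le_of_lt (le_abs_self _) (hl t (t + y))
    have hgy2 : g / 2 * y ^ 2 ≤ l / 4 := by
      have ha : g * y * y ≤ l / 2 * y := mul_le_mul_of_nonneg_right hgy hy0.le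
      have hb : l / 2 * y ≤ l / 2 * 1 := mul_le_mul_of_nonneg_left hyr1 (by linarith only [hl0])
      linarith only [ha, hb]
    simp only [hφ_def, add_sub_cancel_left]
    linarith only [hvy, hl1, hgy2, hl0]
  have hty : t ≤ t + y := by linarith only [hy0]
  obtain ⟨s₀, hs₀mem, hs₀⟩ := intermediate_value_Icc' hty hφc.continuousOn
    (Set.mem_Icc.2 ⟨hφty.le, hφt.le⟩)
  have hts₀ : t < s₀ := by
    rcases eq_or_lt_of_le hs₀mem.1 with h | h
    · exfalso; rw [← h] at hs₀; exact hφt.ne' hs₀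
    · exact h
  have heqs₀ : f₂ s₀ - f₁ t = v * (s₀ - t) - g / 2 * (s₀ - t) ^ 2 := by
    have h := hs₀
    simp only [hφ_def] at h
    linarith only [h]
  have htts₀ : tt ≤ s₀ := hmin1 s₀ hts₀ heqs₀
  have hs₀y : s₀ < t + y := by
    rcases eq_or_lt_of_le hs₀mem.2 with h | h
    · exfalso; rw [h] at hs₀; exact hφty.ne hs₀
    · exact h
  have hτ₁y : tt - t < y := by linarith only [htts₀, hs₀y]
  have hτ₁0 : 0 < tt - t := by linarith only [h_t_tt]
  have hτ₂0 : 0 < t' - tt := by linarith only [h_tt_t']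
  -- oscillation bounds
  have hd : f₂ tt - f₁ t < l := lt_of_le_of_lt (le_abs_self _) (hl t tt)
  have hd' : f₂ tt - f₁ t' < l := lt_of_le_of_lt (le_abs_self _) (hl t' tt)
  -- lower bound on the upward flight time
  have hlow : m ≤ (v + M₁) * (tt - t) := by
    have h2 := hmle tt
    have h3 : f₁ t - f₁ tt ≤ M₁ * (tt - t) := by
      have h4 := hMVT t tt
      rw [abs_of_pos hτ₁0] at h4
      have h5 : f₁ t - f₁ tt ≤ |f₁ tt - f₁ t| := by
        rw [abs_sub_comm]; exact le_abs_self _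
      linarith only [h4, h5]
    have h6 := mul_nonneg hg (sq_nonneg (tt - t))
    linarith only [h2, h3, heq1, h6]
  -- the downward velocity is large
  have hderiv2 : deriv f₂ tt ≤ M₂ := le_trans (le_abs_self _) (hM₂ tt)
  have hvvlb : v - g * y - 2 * M₂ ≤ -vv := by
    rw [hvveq]
    have h1 : g * (tt - t) ≤ g * y := mul_le_mul_of_nonneg_left hτ₁y.le hg
    linarith only [h1, hderiv2]
  have hW : 3 / 4 * v ≤ v - g * y - 2 * M₂ := by
    have h1 : g * y ≤ g * 1 := mul_le_mul_of_nonneg_left hyr1 hg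
    linarith only [h1, hM₂K, hv4K]
  have hWpos : 0 < v - g * y - 2 * M₂ := by linarith only [hW, hv]
  -- upper bounds on the flight times
  have hup1 : (v - g * y - 2 * M₂) * (tt - t) ≤ f₂ tt - f₁ t := by
    have ha := mul_nonneg (mul_nonneg hg (sub_nonneg.2 hτ₁y.le)) hτ₁0.le
    have hb := mul_nonneg hM₂0 hτ₁0.le
    have hc := mul_nonneg (mul_nonneg hg hτ₁0.le) hτ₁0.le
    linarith only [ha, hb, hc, heq1]
  have hup2 : (v - g * y - 2 * M₂) * (t' - tt) ≤ f₂ tt - f₁ t' := by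
    have h1 := mul_le_mul_of_nonneg_right hvvlb hτ₂0.le
    have h2 := mul_nonneg hg (sq_nonneg (t' - tt))
    linarith only [h1, h2, heq2]
  have hsum : (v - g * y - 2 * M₂) * (t' - t) < 2 * l := by
    have hdist : (v - g * y - 2 * M₂) * (t' - t)
        = (v - g * y - 2 * M₂) * (tt - t) + (v - g * y - 2 * M₂) * (t' - tt) := by ring
    linarith only [hdist, hup1, hup2, hd, hd']
  -- upper estimate
  have hW34 : 3 / 4 * v * (t' - t) < 2 * l := by
    have h1 := mul_le_mul_of_nonneg_right hW
      (by linarith only [hτ₁0, hτ₂0] : (0:ℝ) ≤ t' - t)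
    linarith only [h1, hsum]
  have h43 : 3 / 4 * (t' - t) < y := by
    by_contra h
    push_neg at h
    have h1 : v * y ≤ v * (3 / 4 * (t' - t)) := mul_le_mul_of_nonneg_left h hv.le
    linarith only [h1, hvy, hW34]
  have hupper : t' - t - y < (1 - m / (8 * l)) * y := by
    have h1 := mul_lt_mul_of_pos_right hq18 hy0
    linarith only [h1, h43, hy0]
  -- lower estimate
  have hA : m * y ≤ ((v + M₁) * (tt - t)) * y := mul_le_mul_of_nonneg_right hlow hy0.le
  have hB : 0 < ((3 * v - M₁) * (tt - t)) * y :=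
    mul_pos (mul_pos (by linarith only [hvM, hM₁0]) hτ₁0) hy0
  have hC : ((v + M₁) * (tt - t)) * y + ((3 * v - M₁) * (tt - t)) * y
      = 4 * (tt - t) * (v * y) := by ring
  have hD : 4 * (tt - t) * (v * y) = 8 * l * (tt - t) := by rw [hvy]; ring
  have hE : 8 * l * (tt - t) < 8 * l * (t' - t) := by
    have h1 := mul_pos h8l hτ₂0
    linarith only [h1]
  have hstrict : m * y < 8 * l * (t' - t) := by
    linarith only [hA, hB, hC, hD, hE]
  have hlower : (m / (8 * l)) * y < t' - t := by
    rw [div_mul_eq_mul_div, div_lt_iff₀ h8l]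
    linarith only [hstrict]
  refine abs_lt.mpr ⟨?_, by linarith only [hupper]⟩
  have hexp : -((1 - m / (8 * l)) * y) = -y + (m / (8 * l)) * y := by ring
  rw [hexp]
  linarith only [hlower]
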